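/- Let ε > 0 and let n ≥ 3 be an integer. There exists δ > 0 such that for all primes p, q with |log q/log p − φ| < δ, there is a unique positive real number t_n(p,q) satisfying max(h_n·log p, h_{n−1}·log q)^{t} = max(h_{n−1}·log p, h_{n−2}·log q)^{t} + max(h_{n−2}·log p, h_{n−3}·log q)^{t}, and it satisfies |s_n − t_n(p,q)| < ε. -/

import Mathlib

open Real

/-- The golden ratio `(1 + √5)/2`. -/
noncomputable def phiR : ℝ := (1 + Real.sqrt 5) / 2

/-- `mmax p q n = max(h_n·log p, h_{n-1}·log q)`, the logarithmic Mahler measure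
of `p^{h_n}/q^{h_{n-1}}` for distinct primes `p`, `q`, where `h` is Fibonacci. -/
noncomputable def mmax (p q n : ℕ) : ℝ :=
  max ((Nat.fib n : ℝ) * Real.log p) ((Nat.fib (n - 1) : ℝ) * Real.log q)

/-- `gmax n = max(h_n, φ·h_{n-1})`. -/
noncomputable def gmax (n : ℕ) : ℝ :=
  max (Nat.fib n : ℝ) (phiR * (Nat.fib (n - 1) : ℝ))

/-- The equation defining `t_n(p,q)`:
`m(p^{h_n}/q^{h_{n-1}})^t = m(p^{h_{n-1}}/q^{h_{n-2}})^t + m(p^{h_{n-2}}/q^{h_{n-3}})^t`. -/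
def peq (p q n : ℕ) (t : ℝ) : Prop :=
  mmax p q n ^ t = mmax p q (n - 1) ^ t + mmax p q (n - 2) ^ t

/-- The equation defining `s_n`:
`max(h_n, φ h_{n-1})^t = max(h_{n-1}, φ h_{n-2})^t + max(h_{n-2}, φ h_{n-3})^t`. -/
def geq (n : ℕ) (t : ℝ) : Prop :=
  gmax n ^ t = gmax (n - 1) ^ t + gmax (n - 2) ^ t

/-- Condition (W) on a pair of primes `(p,q)` relative to `N`. -/
def CondW (N p q : ℕ) : Prop :=
  ((Nat.fib N : ℝ) / Nat.fib (N - 1) < Real.log q / Real.log p ∧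
    Real.log q / Real.log p < (Nat.fib (N - 1) : ℝ) / Nat.fib (N - 2)) ∨
  ((Nat.fib (N - 1) : ℝ) / Nat.fib (N - 2) < Real.log q / Real.log p ∧
    Real.log q / Real.log p < (Nat.fib N : ℝ) / Nat.fib (N - 1))

/-- `V_n`: vectors `x ∈ ℕ^N` (1-based entry `i` is `x ⟨i-1⟩`) with
`Σ x_i h_i = h_n` and `Σ x_i h_{i-1} = h_{n-1}`. -/
def Vset (N n : ℕ) : Set (Fin N → ℕ) :=
  {x | ∑ i, x i * Nat.fib ((i : ℕ) + 1) = Nat.fib n ∧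
       ∑ i, x i * Nat.fib (i : ℕ) = Nat.fib (n - 1)}

/-- The measure function `f_x(t) = (Σ_{i=1}^N x_i·max(h_i log p, h_{i-1} log q)^t)^{1/t}`. -/
noncomputable def fmeas (N p q : ℕ) (x : Fin N → ℕ) (t : ℝ) : ℝ :=
  (∑ i, (x i : ℝ) * mmax p q ((i : ℕ) + 1) ^ t) ^ (1 / t)

/-- `x_n(i)`: the vector whose (i−2)nd (1-based) entry is `h_{n+1−i}`, whose
(i−1)st entry is `h_{n+2−i}`, and whose other entries are 0.  (For `i = 2`, `n = 1`
this gives `x_1(2) = (1,0,…,0)`.) -/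
def xvec (N n i : ℕ) : Fin N → ℕ := fun j =>
  if (j : ℕ) + 3 = i then Nat.fib (n + 1 - i)
  else if (j : ℕ) + 2 = i then Nat.fib (n + 2 - i)
  else 0

/-- `S_n = {x_n(i) : 3 ≤ i ≤ n+1}` for `n ≥ 2`, and `S_1 = {x_1(2)}`. -/
def Sset (N n : ℕ) : Set (Fin N → ℕ) :=
  if n = 1 then {xvec N 1 2}
  else {x | ∃ i, 3 ≤ i ∧ i ≤ n + 1 ∧ x = xvec N n i}

/-- `z` is almost consecutive-free: `z_j·z_{j+1} ≠ 0` implies `z_i = 0` for all `i > j+1`. -/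
def ACF (N : ℕ) (z : Fin N → ℕ) : Prop :=
  ∀ (j : Fin N) (hj : (j : ℕ) + 1 < N),
    z j * z ⟨(j : ℕ) + 1, hj⟩ ≠ 0 → ∀ i : Fin N, (j : ℕ) + 1 < (i : ℕ) → z i = 0

/-- `C_n`: the almost consecutive-free elements of `V_n`. -/
def Cset (N n : ℕ) : Set (Fin N → ℕ) := {z ∈ Vset N n | ACF N z}

/-- A factorization of `z ∈ V_n`: a `K`-tuple `x` with `x k ∈ V_{idx k}`,
`1 ≤ idx k ≤ n`, and `z = Σ_k x k`. -/
def IsFactorization (N n : ℕ) (z : Fin N → ℕ) {K : ℕ}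
    (idx : Fin K → ℕ) (x : Fin K → Fin N → ℕ) : Prop :=
  (∀ k, 1 ≤ idx k ∧ idx k ≤ n ∧ x k ∈ Vset N (idx k)) ∧ z = ∑ k, x k

/-- A tuple is `S`-type if each component lies in `∪_{i=1}^n S_i`. -/
def STypeFac (N n : ℕ) {K : ℕ} (x : Fin K → Fin N → ℕ) : Prop :=
  ∀ k, ∃ i, 1 ≤ i ∧ i ≤ n ∧ x k ∈ Sset N i

/-- `z` is `S`-restricted: every non-trivial (i.e. `K ≠ 1`) factorization is `S`-type. -/
def SRestricted (N n : ℕ) (z : Fin N → ℕ) : Prop :=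
  ∀ (K : ℕ) (idx : Fin K → ℕ) (x : Fin K → Fin N → ℕ),
    IsFactorization N n z idx x → K ≠ 1 → STypeFac N n x

/-- `R_n`: the `S`-restricted elements of `C_n`. -/
def Rset (N n : ℕ) : Set (Fin N → ℕ) := {z ∈ Cset N n | SRestricted N n z}

/-- The infimum attaining set `U_x = {t > 0 : f_x(t) = min{f_y(t) : y ∈ V_j}}`. -/
def Uset (N p q j : ℕ) (x : Fin N → ℕ) : Set ℝ :=
  {t | 0 < t ∧ IsLeast ((fun y => fmeas N p q y t) '' Vset N j) (fmeas N p q x t)}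

/-- The shift map `λ((x_1,…,x_N)) = (0,x_1,…,x_{N-1})`. -/
def shiftMap (N : ℕ) (x : Fin N → ℕ) : Fin N → ℕ := fun j =>
  if (j : ℕ) = 0 then 0
  else x ⟨(j : ℕ) - 1, lt_of_le_of_lt (Nat.sub_le _ _) j.isLt⟩

/-- Auxiliary: `Mfun r k = max(h_k, h_{k-1}·r)`. -/
noncomputable def Mfun (r : ℝ) (k : ℕ) : ℝ :=
  max ((Nat.fib k : ℝ)) ((Nat.fib (k - 1) : ℝ) * r)

lemma Mfun_nonneg (r : ℝ) (k : ℕ) : 0 ≤ Mfun r k :=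
  le_trans (by positivity) (le_max_left _ _)

lemma Mfun_pos (r : ℝ) (k : ℕ) (hk : 1 ≤ k) : 0 < Mfun r k :=
  lt_of_lt_of_le (by exact_mod_cast Nat.fib_pos.mpr hk) (le_max_left _ _)

lemma Mfun_lt (r : ℝ) (hr : r < 2) (m j : ℕ) (hm : 3 ≤ m) (hj : j < m) :
    Mfun r j < Mfun r m := by
  have hfib : (Nat.fib m : ℝ) ≤ Mfun r m := le_max_left _ _
  have h2 : 1 ≤ m - 2 := by omega
  have hfm2 : 0 < (Nat.fib (m - 2) : ℝ) := by exact_mod_cast Nat.fib_pos.mpr h2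
  have hsum : (Nat.fib (m - 2) : ℝ) + (Nat.fib (m - 1) : ℝ) = Nat.fib m := by
    have : Nat.fib (m - 2) + Nat.fib (m - 1) = Nat.fib m := by
      have : m = (m - 2) + 2 := by omega
      rw [this, Nat.fib_add_two]; congr 1 <;> omega
    exact_mod_cast this
  have h1 : (Nat.fib j : ℝ) < Nat.fib m := by
    have hle : (Nat.fib j : ℝ) ≤ Nat.fib (m - 1) := by
      exact_mod_cast Nat.fib_mono (by omega)
    have : (Nat.fib (m - 1) : ℝ) < Nat.fib m := by linarith
    linarith
  have h2' : (Nat.fib (j - 1) : ℝ) * r < Nat.fib m := by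
    have hle : (Nat.fib (j - 1) : ℝ) ≤ Nat.fib (m - 2) := by
      exact_mod_cast Nat.fib_mono (by omega)
    rcases le_or_gt r 0 with h | h
    · have : (Nat.fib (j - 1) : ℝ) * r ≤ 0 := mul_nonpos_of_nonneg_of_nonpos (by positivity) h
      have : (0:ℝ) < Nat.fib m := by exact_mod_cast Nat.fib_pos.mpr (by omega)
      linarith
    · have : (Nat.fib (j - 1) : ℝ) * r ≤ (Nat.fib (m - 2) : ℝ) * r :=
        mul_le_mul_of_nonneg_right hle h.le
      have h2r : (Nat.fib (m - 2) : ℝ) * r < (Nat.fib (m - 2) : ℝ) * 2 :=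
        mul_lt_mul_of_pos_left hr hfm2
      have hmono : (Nat.fib (m - 2) : ℝ) ≤ Nat.fib (m - 1) := by
        exact_mod_cast Nat.fib_mono (by omega)
      linarith
  exact lt_of_lt_of_le (max_lt h1 h2') hfib

lemma phiR_pos : 0 < phiR := by
  unfold phiR
  have : 0 ≤ Real.sqrt 5 := Real.sqrt_nonneg 5
  linarith

lemma phiR_lt_two : phiR < 2 := by
  unfold phiR
  have h : Real.sqrt 5 < 3 := by
    rw [show (3:ℝ) = Real.sqrt 9 by
      rw [show (9:ℝ) = 3 ^ 2 by norm_num, Real.sqrt_sq (by norm_num)]]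
    exact Real.sqrt_lt_sqrt (by norm_num) (by norm_num)
  linarith

lemma gmax_eq_Mfun (k : ℕ) : gmax k = Mfun phiR k := by
  unfold gmax Mfun; rw [mul_comm]

lemma normIff (a b c t : ℝ) (ha : 0 < a) (hb : 0 ≤ b) (hc : 0 ≤ c) :
    a ^ t = b ^ t + c ^ t ↔ (b / a) ^ t + (c / a) ^ t = 1 := by
  have hat : (0:ℝ) < a ^ t := Real.rpow_pos_of_pos ha t
  rw [Real.div_rpow hb ha.le, Real.div_rpow hc ha.le, ← add_div,
    div_eq_one_iff_eq hat.ne', eq_comm]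

lemma Fanti (u v : ℝ) (hu : 0 < u) (hu1 : u < 1) (hv : 0 < v) (hv1 : v < 1) :
    StrictAnti (fun t : ℝ => u ^ t + v ^ t) := fun x y hxy =>
  add_lt_add (Real.rpow_lt_rpow_of_exponent_gt hu hu1 hxy)
    (Real.rpow_lt_rpow_of_exponent_gt hv hv1 hxy)

lemma Fcont (u v : ℝ) (hu : 0 < u) (hv : 0 < v) :
    Continuous (fun t : ℝ => u ^ t + v ^ t) := by
  have h : ∀ w : ℝ, 0 < w → Continuous (fun t : ℝ => w ^ t) := by
    intro w hw
    have : (fun t : ℝ => w ^ t) = fun t => Real.exp (Real.log w * t) :=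
      funext fun t => Real.rpow_def_of_pos hw t
    rw [this]
    exact Real.continuous_exp.comp (continuous_const.mul continuous_id)
  exact (h u hu).add (h v hv)

lemma rootLemma (a b c lo hi : ℝ) (ha : 0 < a) (hb : 0 < b) (hc : 0 < c)
    (hba : b < a) (hca : c < a) (hlo : 0 < lo) (hlh : lo < hi)
    (h1 : 1 < (b / a) ^ lo + (c / a) ^ lo) (h2 : (b / a) ^ hi + (c / a) ^ hi < 1) :
    ∃ t, lo < t ∧ t < hi ∧ a ^ t = b ^ t + c ^ t ∧
      ∀ t', 0 < t' → a ^ t' = b ^ t' + c ^ t' → t' = t := by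
  set u := b / a with hu_def
  set v := c / a with hv_def
  have hu : 0 < u := div_pos hb ha
  have hu1 : u < 1 := (div_lt_one ha).2 hba
  have hv : 0 < v := div_pos hc ha
  have hv1 : v < 1 := (div_lt_one ha).2 hca
  have hanti := Fanti u v hu hu1 hv hv1
  have hcont := Fcont u v hu hv
  have hmem : (1:ℝ) ∈ Set.Ioo ((fun t : ℝ => u ^ t + v ^ t) hi)
      ((fun t : ℝ => u ^ t + v ^ t) lo) := ⟨h2, h1⟩
  have := intermediate_value_Ioo' hlh.le hcont.continuousOn hmem
  obtain ⟨t, htmem, htval⟩ := this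
  refine ⟨t, htmem.1, htmem.2, (normIff a b c t ha hb.le hc.le).mpr htval, ?_⟩
  intro t' _ ht'
  have ht'val : u ^ t' + v ^ t' = 1 := (normIff a b c t' ha hb.le hc.le).mp ht'
  have htval' : u ^ t + v ^ t = 1 := htval
  exact hanti.injective (show u ^ t' + v ^ t' = u ^ t + v ^ t by rw [ht'val, htval'])

lemma mmax_eq_Mfun (p q k : ℕ) (hp : 0 < Real.log p) :
    mmax p q k = Real.log p * Mfun (Real.log q / Real.log p) k := by
  unfold mmax Mfun
  rw [mul_max_of_nonneg _ _ hp.le]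
  congr 1
  · ring
  · field_simp

lemma peq_iff (p q n : ℕ) (t : ℝ) (hp : 0 < Real.log p) :
    peq p q n t ↔ Mfun (Real.log q / Real.log p) n ^ t
      = Mfun (Real.log q / Real.log p) (n - 1) ^ t
        + Mfun (Real.log q / Real.log p) (n - 2) ^ t := by
  set r := Real.log q / Real.log p
  have hl : (0:ℝ) < Real.log p ^ t := Real.rpow_pos_of_pos hp t
  unfold peq
  rw [mmax_eq_Mfun p q n hp, mmax_eq_Mfun p q (n-1) hp, mmax_eq_Mfun p q (n-2) hp,
    Real.mul_rpow hp.le (Mfun_nonneg r n), Real.mul_rpow hp.le (Mfun_nonneg r (n-1)),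
    Real.mul_rpow hp.le (Mfun_nonneg r (n-2)), ← mul_add]
  exact mul_right_inj' hl.ne'

/-- Lemma `TApprox`: let `ε > 0` and `n ≥ 3`.  There is `δ > 0` such that for
all primes `p, q` with `|log q / log p − φ| < δ`, there is a unique positive real `t_n(p,q)`
satisfying the Mahler-measure equation, and it satisfies `|s_n − t_n(p,q)| < ε`. -/
theorem stmt3 (s : ℕ → ℝ) (hs : ∀ m : ℕ, 3 ≤ m → 0 < s m ∧ geq m (s m))
    (ε : ℝ) (hε : 0 < ε) (n : ℕ) (hn : 3 ≤ n) :
    ∃ δ : ℝ, 0 < δ ∧ ∀ p q : ℕ, p.Prime → q.Prime →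
      |Real.log q / Real.log p - phiR| < δ →
      ∃ t : ℝ, (0 < t ∧ peq p q n t) ∧ (∀ t' : ℝ, 0 < t' → peq p q n t' → t' = t) ∧
        |s n - t| < ε := by
  obtain ⟨hsn_pos, hsn_eq⟩ := hs n hn
  set sn := s n with hsn_def
  set A := Mfun phiR n with hA_def
  set B := Mfun phiR (n - 1) with hB_def
  set C := Mfun phiR (n - 2) with hC_def
  have hA : 0 < A := Mfun_pos _ _ (by omega)
  have hB : 0 < B := Mfun_pos _ _ (by omega)
  have hC : 0 < C := Mfun_pos _ _ (by omega)
  have hBA : B < A := Mfun_lt _ phiR_lt_two n (n - 1) hn (by omega)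
  have hCA : C < A := Mfun_lt _ phiR_lt_two n (n - 2) hn (by omega)
  have hroot : A ^ sn = B ^ sn + C ^ sn := by
    unfold geq at hsn_eq
    rwa [gmax_eq_Mfun, gmax_eq_Mfun, gmax_eq_Mfun] at hsn_eq
  set lo := sn - min ε sn / 2 with hlo_def
  set hi := sn + ε / 2 with hhi_def
  clear_value lo hi
  have hmin_pos : 0 < min ε sn := lt_min hε hsn_pos
  have hmin_le : min ε sn ≤ sn := min_le_right _ _
  have hlo_pos : 0 < lo := by rw [hlo_def]; linarith
  have hlo_lt : lo < sn := by rw [hlo_def]; linarith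
  have hhi_gt : sn < hi := by rw [hhi_def]; linarith
  have hu : 0 < B / A := div_pos hB hA
  have hu1 : B / A < 1 := (div_lt_one hA).2 hBA
  have hv : 0 < C / A := div_pos hC hA
  have hv1 : C / A < 1 := (div_lt_one hA).2 hCA
  have hanti := Fanti (B / A) (C / A) hu hu1 hv hv1
  have hone : (B / A) ^ sn + (C / A) ^ sn = 1 :=
    (normIff A B C sn hA hB.le hC.le).mp hroot
  have hval1 : 1 < (B / A) ^ lo + (C / A) ^ lo := by
    have := hanti hlo_lt
    simp only at this
    linarith [hone]
  have hval2 : (B / A) ^ hi + (C / A) ^ hi < 1 := by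
    have := hanti hhi_gt
    simp only at this
    linarith [hone]
  -- continuity in r
  have hMc : ∀ k : ℕ, Continuous fun r : ℝ => Mfun r k := fun k =>
    continuous_const.max (continuous_const.mul continuous_id)
  have hratc : ∀ k : ℕ, ContinuousAt (fun r : ℝ => Mfun r k / Mfun r n) phiR :=
    fun k => ((hMc k).continuousAt).div ((hMc n).continuousAt) hA.ne'
  have hgc : ∀ e : ℝ, 0 ≤ e → ContinuousAt
      (fun r : ℝ => (Mfun r (n-1) / Mfun r n) ^ e + (Mfun r (n-2) / Mfun r n) ^ e) phiR := by
    intro e he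
    exact ((Real.continuousAt_rpow_const _ e (Or.inr he)).comp (hratc (n-1))).add
      ((Real.continuousAt_rpow_const _ e (Or.inr he)).comp (hratc (n-2)))
  have e1 : ∀ᶠ r in nhds phiR,
      (fun r : ℝ => (Mfun r (n-1) / Mfun r n) ^ lo + (Mfun r (n-2) / Mfun r n) ^ lo) r
        ∈ Set.Ioi (1:ℝ) :=
    (hgc lo hlo_pos.le) (Ioi_mem_nhds hval1)
  have e2 : ∀ᶠ r in nhds phiR,
      (fun r : ℝ => (Mfun r (n-1) / Mfun r n) ^ hi + (Mfun r (n-2) / Mfun r n) ^ hi) r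
        ∈ Set.Iio (1:ℝ) :=
    (hgc hi (by linarith)) (Iio_mem_nhds hval2)
  have e3 : ∀ᶠ r in nhds phiR, r < 2 := Filter.Tendsto.eventually_lt_const phiR_lt_two
    (Filter.tendsto_id) |>.mono (fun _ h => h)
  have eall := (e1.and e2).and e3
  rw [Metric.eventually_nhds_iff] at eall
  obtain ⟨δ, hδ, hδ'⟩ := eall
  refine ⟨δ, hδ, ?_⟩
  intro p q hp hq hpq
  have hlogp : 0 < Real.log p :=
    Real.log_pos (by exact_mod_cast hp.one_lt)
  set r := Real.log q / Real.log p with hr_def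
  have hdist : dist r phiR < δ := by rwa [Real.dist_eq]
  obtain ⟨⟨hr1, hr2⟩, hr3⟩ := hδ' hdist
  simp only [Set.mem_Ioi, Set.mem_Iio] at hr1 hr2
  have ha' : 0 < Mfun r n := Mfun_pos _ _ (by omega)
  have hb' : 0 < Mfun r (n-1) := Mfun_pos _ _ (by omega)
  have hc' : 0 < Mfun r (n-2) := Mfun_pos _ _ (by omega)
  have hba' : Mfun r (n-1) < Mfun r n := Mfun_lt _ hr3 n (n-1) hn (by omega)
  have hca' : Mfun r (n-2) < Mfun r n := Mfun_lt _ hr3 n (n-2) hn (by omega)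
  obtain ⟨t, htlo, hthi, htroot, htuniq⟩ :=
    rootLemma (Mfun r n) (Mfun r (n-1)) (Mfun r (n-2)) lo hi
      ha' hb' hc' hba' hca' hlo_pos (lt_trans hlo_lt hhi_gt) hr1 hr2
  have htpos : 0 < t := lt_trans hlo_pos htlo
  refine ⟨t, ⟨htpos, (peq_iff p q n t hlogp).mpr htroot⟩,
    fun t' ht' hpeq => htuniq t' ht' ((peq_iff p q n t' hlogp).mp hpeq), ?_⟩
  rw [abs_sub_lt_iff]
  constructor
  · have k1 : sn - t < sn - lo := by linarith
    have k2 : sn - lo = min ε sn / 2 := by rw [hlo_def]; ring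
    have k3 : min ε sn / 2 ≤ ε / 2 := by
      have := min_le_left ε sn; linarith
    linarith
  · have k1 : t - sn < hi - sn := by linarith
    have k2 : hi - sn = ε / 2 := by rw [hhi_def]; ring
    linarith
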